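/- Let (E,𝒯) be a topological space and (Pₙ) a sequence of Borel probability measures on E converging pointwise on open sets to an outer regular Borel probability measure P, i.e. lim Pₙ(O) = P(O) for every open O. Then lim Pₙ(A) = P(A) for every Borel set A. -/

import Mathlib

open MeasureTheory Filter Topology
open scoped ENNReal

theorem stmt2 {E : Type*} [TopologicalSpace E] [MeasurableSpace E] [BorelSpace E]
    (P : Measure E) [IsProbabilityMeasure P]
    (Pn : ℕ → Measure E) (hPn : ∀ n, IsProbabilityMeasure (Pn n))
    (houter : ∀ A : Set E, MeasurableSet A → ∀ ε : ℝ≥0∞, 0 < ε →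
      ∃ O : Set E, IsOpen O ∧ A ⊆ O ∧ P (O \ A) < ε)
    (hopen : ∀ O : Set E, IsOpen O → Tendsto (fun n => Pn n O) atTop (𝓝 (P O))) :
    ∀ A : Set E, MeasurableSet A → Tendsto (fun n => Pn n A) atTop (𝓝 (P A)) := by
  intro A hA
  rw [ENNReal.tendsto_nhds (measure_ne_top P A)]
  intro ε hε
  have hε2 : (0 : ℝ≥0∞) < ε / 2 := ENNReal.half_pos hε.ne'
  obtain ⟨O, hO, hAO, hPO⟩ := houter A hA (ε / 2) hε2
  obtain ⟨U, hU, hAcU, hPU⟩ := houter Aᶜ hA.compl (ε / 2) hε2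
  have hOup : ∀ᶠ n in atTop, Pn n O < P O + ε / 2 := by
    apply (hopen O hO).eventually_lt_const
    exact ENNReal.lt_add_right (measure_ne_top P O) hε2.ne'
  have hUup : ∀ᶠ n in atTop, Pn n U < P U + ε / 2 := by
    apply (hopen U hU).eventually_lt_const
    exact ENNReal.lt_add_right (measure_ne_top P U) hε2.ne'
  filter_upwards [hOup, hUup] with n hO' hU'
  have := hPn n
  constructor
  · -- lower bound : P A - ε ≤ Pn n A
    rw [tsub_le_iff_right]
    have hUcA : Uᶜ ⊆ A := by
      intro x hx
      by_contra hxA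
      exact hx (hAcU hxA)
    have h1 : P A ≤ P Uᶜ + ε / 2 := by
      have hsub : A ⊆ Uᶜ ∪ (U \ Aᶜ) := by
        intro x hx
        by_cases hxU : x ∈ U
        · exact Or.inr ⟨hxU, fun h => h hx⟩
        · exact Or.inl hxU
      calc P A ≤ P (Uᶜ ∪ (U \ Aᶜ)) := measure_mono hsub
        _ ≤ P Uᶜ + P (U \ Aᶜ) := measure_union_le _ _
        _ ≤ P Uᶜ + ε / 2 := add_le_add_right hPU.le _
    have h2 : P Uᶜ ≤ Pn n Uᶜ + ε / 2 := by
      rw [measure_compl hU.measurableSet (measure_ne_top P U),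
        measure_compl hU.measurableSet (measure_ne_top (Pn n) U)]
      simp only [measure_univ]
      rw [tsub_le_iff_right]
      calc (1 : ℝ≥0∞) = (1 - Pn n U) + Pn n U :=
            (tsub_add_cancel_of_le prob_le_one).symm
        _ ≤ (1 - Pn n U) + (P U + ε / 2) := add_le_add_right hU'.le _
        _ = 1 - Pn n U + ε / 2 + P U := by ring
    calc P A ≤ P Uᶜ + ε / 2 := h1
      _ ≤ (Pn n Uᶜ + ε / 2) + ε / 2 := add_le_add_left h2 _
      _ = Pn n Uᶜ + ε := by rw [add_assoc, ENNReal.add_halves]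
      _ ≤ Pn n A + ε := add_le_add_left (measure_mono hUcA) _
  · -- upper bound : Pn n A ≤ P A + ε
    have h3 : P O ≤ P A + ε / 2 := by
      calc P O ≤ P (A ∪ (O \ A)) := measure_mono (by
            intro x hx
            by_cases hxA : x ∈ A
            · exact Or.inl hxA
            · exact Or.inr ⟨hx, hxA⟩)
        _ ≤ P A + P (O \ A) := measure_union_le _ _
        _ ≤ P A + ε / 2 := add_le_add_right hPO.le _
    calc Pn n A ≤ Pn n O := measure_mono hAO
      _ ≤ P O + ε / 2 := hO'.le
      _ ≤ (P A + ε / 2) + ε / 2 := add_le_add_left h3 _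
      _ = P A + ε := by rw [add_assoc, ENNReal.add_halves]
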